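/- Let f : ℝ^n → ℝ be twice continuously differentiable on an open set containing the unit sphere, let η ∈ (0, 1/2] and M > 0. Fix x with ‖x‖ = 1, set p = ∇f(x), and define x(α) = [ (1 − α²‖p‖²) x − 2α p ] / (1 + α²‖p‖²). Assume x^T p = 0, ‖∇f(x)‖ ≤ M, and that for each α ∈ (0, (2−η)/(5M)] the operator norm of the Hessian ∇²f(z) is at most M for every z on the line segment joining x and x(α). Then for every α ∈ (0, (2−η)/(5M)], f(x(α)) ≤ f(x) − η α ‖∇f(x)‖². In particular, a backtracking curvilinear search with backtracking factor β ∈ (0,1) and initial trial step at most some fixed bound returns a step size α_k ≥ (2−η)β/(5M) > 0. -/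

import Mathlib

open Set

set_option maxHeartbeats 2000000 in
/-- sufficient decrease along the curvilinear search path for every step size
`α ∈ (0, (2−η)/(5M)]`, and hence a lower bound `(2−η)β/(5M)` for the step size returned
by a backtracking curvilinear search. -/
theorem curvilinear_search_step_lower_bound
    {n : ℕ} (f : EuclideanSpace ℝ (Fin n) → ℝ)
    (U : Set (EuclideanSpace ℝ (Fin n))) (hU : IsOpen U)
    (hSU : Metric.sphere (0 : EuclideanSpace ℝ (Fin n)) 1 ⊆ U)
    (hf : ContDiffOn ℝ 2 f U)
    (η M : ℝ) (hη : 0 < η) (hη' : η ≤ 1 / 2) (hM : 0 < M)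
    (x : EuclideanSpace ℝ (Fin n)) (hx : ‖x‖ = 1)
    (p : EuclideanSpace ℝ (Fin n)) (hp : p = gradient f x)
    (hxp : (inner ℝ x p : ℝ) = 0)
    (hgM : ‖gradient f x‖ ≤ M)
    (xc : ℝ → EuclideanSpace ℝ (Fin n))
    (hxc : ∀ α : ℝ, xc α = (1 / (1 + α ^ 2 * ‖p‖ ^ 2)) •
      ((1 - α ^ 2 * ‖p‖ ^ 2) • x - (2 * α) • p))
    (hHess : ∀ α ∈ Set.Ioc (0 : ℝ) ((2 - η) / (5 * M)),
      ∀ z ∈ segment ℝ x (xc α), ‖fderiv ℝ (gradient f) z‖ ≤ M) :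
    (∀ α ∈ Set.Ioc (0 : ℝ) ((2 - η) / (5 * M)),
      f (xc α) ≤ f x - η * α * ‖gradient f x‖ ^ 2) ∧
    (∀ β ∈ Set.Ioo (0 : ℝ) 1, ∀ αbar : ℝ, (2 - η) / (5 * M) ≤ αbar →
      ∃ ℓ : ℕ,
        f (xc (β ^ ℓ * αbar)) ≤ f x - η * (β ^ ℓ * αbar) * ‖gradient f x‖ ^ 2 ∧
        (2 - η) * β / (5 * M) ≤ β ^ ℓ * αbar) := by
  classical
  set q : ℝ := ‖p‖ with hq_def
  set A : ℝ := (2 - η) / (5 * M) with hA_def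
  clear_value q A
  have hA : 0 < A := by
    rw [hA_def]
    exact div_pos (by linarith) (by positivity)
  have hgxq : ‖gradient f x‖ = q := by rw [hq_def, hp]
  have hqM : q ≤ M := by rw [← hgxq]; exact hgM
  have hq0 : 0 ≤ q := by rw [hq_def]; exact norm_nonneg p
  -- rewrite the curve as a linear combination
  have hxceq : ∀ s : ℝ, xc s
      = ((1 - s^2*q^2)/(1+s^2*q^2)) • x + (-(2*s)/(1+s^2*q^2)) • p := by
    intro s
    rw [hxc s, smul_sub, smul_smul, smul_smul, sub_eq_add_neg, ← neg_smul]
    congr 1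
    · congr 1; ring
    · congr 1; ring
  have hD : ∀ s : ℝ, (0:ℝ) < 1 + s^2*q^2 := fun s => by positivity
  have hxc0 : xc 0 = x := by
    rw [hxceq 0]; norm_num
  -- curve stays on the unit sphere
  have hnormsq : ∀ a b : ℝ, ‖a • x + b • p‖^2 = a^2 + b^2*q^2 := by
    intro a b
    rw [norm_add_sq_real, real_inner_smul_left, real_inner_smul_right, hxp]
    simp [norm_smul, mul_pow, sq_abs, hx, ← hq_def]
  have hnorm : ∀ s : ℝ, ‖xc s‖ = 1 := by
    intro s
    have h1 : ‖xc s‖^2 = 1 := by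
      rw [hxceq s, hnormsq]
      field_simp
      ring
    nlinarith [norm_nonneg (xc s)]
  have hxcU : ∀ s : ℝ, xc s ∈ U := by
    intro s
    exact hSU (by simpa [mem_sphere_iff_norm] using hnorm s)
  -- differentiability facts
  have hfdiff : ∀ z ∈ U, DifferentiableAt ℝ f z := fun z hz =>
    (hf.contDiffAt (hU.mem_nhds hz)).differentiableAt two_ne_zero
  have hgdiff : ∀ z ∈ U, DifferentiableAt ℝ (gradient f) z := by
    intro z hz
    have h2 : ContDiffAt ℝ 2 f z := hf.contDiffAt (hU.mem_nhds hz)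
    have h1 : ContDiffAt ℝ 1 (fderiv ℝ f) z := h2.fderiv_right (by norm_num)
    have hd : DifferentiableAt ℝ (fderiv ℝ f) z := h1.differentiableAt one_ne_zero
    exact ((InnerProductSpace.toDual ℝ
      _).symm.toContinuousLinearEquiv.toContinuousLinearMap.differentiableAt).comp z hd
  have hfd : ∀ (z v : EuclideanSpace ℝ (Fin n)),
      (fderiv ℝ f z) v = (inner ℝ (gradient f z) v : ℝ) := fun z v =>
    (InnerProductSpace.toDual_symm_apply).symm
  -- derivative of the curve
  set v : ℝ → EuclideanSpace ℝ (Fin n) := fun s =>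
    ((-4*s*q^2)/(1+s^2*q^2)^2) • x + ((-2*(1-s^2*q^2))/(1+s^2*q^2)^2) • p with hv_def
  clear_value v
  have hsqd : ∀ s : ℝ, HasDerivAt (fun t:ℝ => t^2*q^2) (2*s*q^2) s := by
    intro s
    simpa using (hasDerivAt_pow 2 s).mul_const (q^2)
  have hc1 : ∀ s : ℝ, HasDerivAt (fun t : ℝ => (1-t^2*q^2)/(1+t^2*q^2))
      ((-4*s*q^2)/(1+s^2*q^2)^2) s := by
    intro s
    have h1 : HasDerivAt (fun t:ℝ => 1 - t^2*q^2) (-(2*s*q^2)) s := by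
      simpa using (hasDerivAt_const s (1:ℝ)).fun_sub (hsqd s)
    have h2 : HasDerivAt (fun t:ℝ => 1 + t^2*q^2) (2*s*q^2) s := by
      simpa using (hasDerivAt_const s (1:ℝ)).fun_add (hsqd s)
    have := h1.div h2 (ne_of_gt (hD s))
    refine this.congr_deriv ?_
    field_simp
    ring
  have hc2 : ∀ s : ℝ, HasDerivAt (fun t : ℝ => -(2*t)/(1+t^2*q^2))
      ((-2*(1-s^2*q^2))/(1+s^2*q^2)^2) s := by
    intro s
    have h1 : HasDerivAt (fun t:ℝ => -(2*t)) (-2 : ℝ) s := by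
      simpa using ((hasDerivAt_id s).const_mul (2:ℝ)).fun_neg
    have h2 : HasDerivAt (fun t:ℝ => 1 + t^2*q^2) (2*s*q^2) s := by
      simpa using (hasDerivAt_const s (1:ℝ)).fun_add (hsqd s)
    have := h1.div h2 (ne_of_gt (hD s))
    refine this.congr_deriv ?_
    field_simp
    ring
  have hv : ∀ s : ℝ, HasDerivAt xc (v s) s := by
    intro s
    have h := ((hc1 s).smul_const x).add ((hc2 s).smul_const p)
    have hfun : xc = fun t => ((1 - t^2*q^2)/(1+t^2*q^2)) • x + (-(2*t)/(1+t^2*q^2)) • p :=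
      funext hxceq
    rw [hfun, hv_def]
    exact h
  -- norm bound on the curve velocity
  have hvle : ∀ s : ℝ, ‖v s‖ ≤ 2*q := by
    intro s
    have h1 : ‖v s‖^2 = ((-4*s*q^2)/(1+s^2*q^2)^2)^2 + ((-2*(1-s^2*q^2))/(1+s^2*q^2)^2)^2*q^2 := by
      simp only [hv_def]
      exact hnormsq _ _
    have hDs := hD s
    have he : ((-4*s*q^2)/(1+s^2*q^2)^2)^2 + ((-2*(1-s^2*q^2))/(1+s^2*q^2)^2)^2*q^2
        = 4*q^2/(1+s^2*q^2)^2 := by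
      field_simp
      ring
    have hle : 4*q^2/(1+s^2*q^2)^2 ≤ 4*q^2 := by
      apply div_le_self (by positivity)
      nlinarith [sq_nonneg (s*q)]
    have h2 : ‖v s‖^2 ≤ (2*q)^2 := by
      rw [h1, he]
      have h4 : (2*q)^2 = 4*q^2 := by ring
      rw [h4]
      exact hle
    exact le_of_pow_le_pow_left₀ two_ne_zero (by positivity) h2
  -- Part 1: sufficient decrease
  have part1 : ∀ α ∈ Set.Ioc (0:ℝ) A, f (xc α) ≤ f x - η * α * q ^ 2 := by
    intro α hα
    obtain ⟨hα0, hαA⟩ := hα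
    rcases eq_or_lt_of_le hq0 with hq0' | hqpos
    · -- trivial case: gradient vanishes
      have hq' : q = 0 := hq0'.symm
      have hp0 : p = 0 := norm_eq_zero.mp (by rw [← hq_def]; exact hq')
      have hxx : xc α = x := by
        rw [hxceq α, hq', hp0]
        norm_num
      rw [hxx, hq']
      simp
    · -- Hessian bound along the curve
      have hHs : ∀ s ∈ Icc (0:ℝ) α, ‖fderiv ℝ (gradient f) (xc s)‖ ≤ M := by
        intro s hs
        rcases eq_or_lt_of_le hs.1 with h0 | h0
        · rw [← h0, hxc0]
          exact hHess α ⟨hα0, hαA⟩ x (left_mem_segment ℝ x (xc α))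
        · exact hHess s ⟨h0, hs.2.trans hαA⟩ (xc s) (right_mem_segment ℝ x (xc s))
      -- gradient along the curve
      have hGd : ∀ s ∈ Icc (0:ℝ) α, HasDerivAt (fun t => gradient f (xc t))
          ((fderiv ℝ (gradient f) (xc s)) (v s)) s := by
        intro s _
        exact ((hgdiff (xc s) (hxcU s)).hasFDerivAt).comp_hasDerivAt s (hv s)
      have hGop : ∀ s ∈ Icc (0:ℝ) α, ‖(fderiv ℝ (gradient f) (xc s)) (v s)‖ ≤ M*(2*q) := by
        intro s hs
        refine (ContinuousLinearMap.le_opNorm _ _).trans ?_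
        exact mul_le_mul (hHs s hs) (hvle s) (norm_nonneg _) hM.le
      have hGbound : ∀ s ∈ Icc (0:ℝ) α, ‖gradient f (xc s) - p‖ ≤ M*(2*q)*s := by
        intro s hs
        have key := norm_image_sub_le_of_norm_deriv_le_segment'
          (f := fun t => gradient f (xc t))
          (f' := fun s => (fderiv ℝ (gradient f) (xc s)) (v s))
          (a := 0) (b := α) (C := M*(2*q))
          (fun s hs => (hGd s hs).hasDerivWithinAt)
          (fun s hs => hGop s (Ico_subset_Icc_self hs))
          s hs
        have h0 : gradient f (xc 0) = p := by rw [hxc0, ← hp]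
        rw [h0] at key
        simpa using key
      -- the auxiliary scalar function and its derivative
      have hφd : ∀ s ∈ Icc (0:ℝ) α, HasDerivAt
          (fun t => f (xc t) - (-(2*t)/(1+t^2*q^2)) * q^2)
          ((inner ℝ (gradient f (xc s) - p) (v s) : ℝ)) s := by
        intro s _
        have h1 : HasDerivAt (fun t => f (xc t)) ((fderiv ℝ f (xc s)) (v s)) s :=
          ((hfdiff (xc s) (hxcU s)).hasFDerivAt).comp_hasDerivAt s (hv s)
        have h2 : HasDerivAt (fun t => (-(2*t)/(1+t^2*q^2)) * q^2)
            (((-2*(1-s^2*q^2))/(1+s^2*q^2)^2) * q^2) s := (hc2 s).mul_const _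
        have h3 := h1.fun_sub h2
        refine h3.congr_deriv ?_
        rw [inner_sub_left, hfd]
        congr 1
        simp only [hv_def]
        rw [inner_add_right, real_inner_smul_right, real_inner_smul_right,
          real_inner_self_eq_norm_sq]
        have hpx : (inner ℝ p x : ℝ) = 0 := by rw [real_inner_comm]; exact hxp
        rw [hpx, ← hq_def]
        ring
      -- bound the derivative of the auxiliary function
      have hφbound : ∀ s ∈ Ico (0:ℝ) α,
          ‖(inner ℝ (gradient f (xc s) - p) (v s) : ℝ)‖ ≤ 4*M*q^2*α := by
        intro s hs
        have h1 : ‖(inner ℝ (gradient f (xc s) - p) (v s) : ℝ)‖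
            ≤ ‖gradient f (xc s) - p‖ * ‖v s‖ := by
          rw [Real.norm_eq_abs]
          exact abs_real_inner_le_norm _ _
        have h2 := hGbound s (Ico_subset_Icc_self hs)
        have h3 := hvle s
        have h4 : ‖gradient f (xc s) - p‖ * ‖v s‖ ≤ (M*(2*q)*s) * (2*q) := by
          refine mul_le_mul h2 h3 (norm_nonneg _) ?_
          exact mul_nonneg (by positivity) hs.1
        have h40 : (0:ℝ) ≤ 4*M*q^2 := by nlinarith [mul_nonneg hM.le (sq_nonneg q)]
        have h6 := mul_le_mul_of_nonneg_left hs.2.le h40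
        linarith [h1, h4, h6]
      -- mean value inequality for the auxiliary function
      have hmv := norm_image_sub_le_of_norm_deriv_le_segment'
        (f := fun t => f (xc t) - (-(2*t)/(1+t^2*q^2)) * q^2)
        (f' := fun s => (inner ℝ (gradient f (xc s) - p) (v s) : ℝ))
        (a := 0) (b := α) (C := 4*M*q^2*α)
        (fun s hs => (hφd s hs).hasDerivWithinAt) hφbound
        α (right_mem_Icc.mpr hα0.le)
      have hX : (fun t => f (xc t) - -(2*t)/(1+t^2*q^2) * q^2) α
          - (fun t => f (xc t) - -(2*t)/(1+t^2*q^2) * q^2) 0 ≤ 4*M*q^2*α*(α-0) :=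
        le_trans (le_abs_self _) (le_of_eq_of_le (Real.norm_eq_abs _).symm hmv)
      simp only [hxc0] at hX
      -- final arithmetic
      have hDα := hD α
      have hMα : M*α ≤ (2-η)/5 := by
        have h := mul_le_mul_of_nonneg_left hαA hM.le
        rw [hA_def] at h
        calc M*α ≤ M*((2-η)/(5*M)) := h
          _ = (2-η)/5 := by field_simp
      have haq : α*q ≤ (2-η)/5 := by
        have : α*q ≤ α*M := mul_le_mul_of_nonneg_left hqM hα0.le
        nlinarith
      have key : (η*α*q^2 + 4*M*q^2*α^2) * (1+α^2*q^2) ≤ 2*α*q^2 := by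
        have haq' : α*q ≤ 2/5 := by linarith
        have hw : (α*q)^2 ≤ 4/25 := by nlinarith [mul_pos hα0 hqpos]
        have h5 : η + 4*(M*α) ≤ (8+η)/5 := by linarith
        have h6 : (η + 4*(M*α)) * (1 + (α*q)^2) ≤ ((8+η)/5) * (29/25) :=
          mul_le_mul h5 (by linarith) (by positivity) (by linarith)
        have h7 : ((8+η)/5)*(29/25) ≤ 2 := by linarith
        have h8 : (η*α*q^2 + 4*M*q^2*α^2) * (1+α^2*q^2)
            = ((η + 4*(M*α)) * (1 + (α*q)^2)) * (α*q^2) := by ring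
        rw [h8]
        nlinarith [mul_pos hα0 (mul_pos hqpos hqpos)]
      have key2 : η*α*q^2 + 4*M*q^2*α^2 ≤ 2*α*q^2/(1+α^2*q^2) := by
        rw [le_div_iff₀ hDα]
        exact key
      have hXr : 2*α*q^2/(1+α^2*q^2) = -((-(2*α)/(1+α^2*q^2)) * q^2) := by ring
      rw [hXr] at key2
      norm_num at hX
      linarith [hX, key2]
  refine ⟨fun α hα => by rw [hgxq]; exact part1 α hα, ?_⟩
  -- Part 2: backtracking lower bound
  intro β hβ αbar hαbar
  obtain ⟨hβ0, hβ1⟩ := hβ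
  have hαbar0 : 0 < αbar := lt_of_lt_of_le hA hαbar
  have hex : ∃ ℓ : ℕ, β^ℓ * αbar ≤ A := by
    obtain ⟨m, hm⟩ := exists_pow_lt_of_lt_one (div_pos hA hαbar0) hβ1
    exact ⟨m, le_of_lt ((lt_div_iff₀ hαbar0).mp hm)⟩
  have hℓ : β ^ Nat.find hex * αbar ≤ A := Nat.find_spec hex
  have hpos : 0 < β ^ Nat.find hex * αbar := by positivity
  refine ⟨Nat.find hex, by rw [hgxq]; exact part1 _ ⟨hpos, hℓ⟩, ?_⟩
  have hAβ : (2-η)*β/(5*M) = A*β := by rw [hA_def]; ring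
  rw [hAβ]
  rcases Nat.eq_zero_or_pos (Nat.find hex) with h0 | h0
  · rw [h0]
    simp only [pow_zero, one_mul]
    calc A*β ≤ A*1 := mul_le_mul_of_nonneg_left hβ1.le hA.le
      _ = A := mul_one A
      _ ≤ αbar := hαbar
  · obtain ⟨m, hm⟩ : ∃ m, Nat.find hex = m+1 := ⟨Nat.find hex - 1, by omega⟩
    have hmin : A < β^m * αbar :=
      lt_of_not_ge (Nat.find_min hex (by omega : m < Nat.find hex))
    rw [hm]
    calc A*β ≤ (β^m * αbar)*β := mul_le_mul_of_nonneg_right hmin.le hβ0.le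
      _ = β^(m+1) * αbar := by ring
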